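/- Let $j_1,\dots,j_{2m-1} \in \{1,\dots,m\}$ be such that exactly one index $j_{2m}$ occurs once and every other index occurs exactly twice. Then $\Delta_{j_1,\mathbf{h}_1} \cdots \Delta_{j_{2m-1},\mathbf{h}_{2m-1}} D(\overline{x})$, as a polynomial in $\overline{x}$, depends only on the block $\mathbf{x}_{j_{2m}}$ (for fixed $\mathbf{h}_1,\dots,\mathbf{h}_{2m-1}$), and it is an affine-linear function of $\mathbf{x}_{j_{2m}}$. -/

import Mathlib

open MvPolynomial

/-- The discrete differencing operator `Δ_{i,h}`. -/
noncomputable def deltaOp {s m : ℕ} (i : Fin m) (h : Fin s → ℤ)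
    (G : MvPolynomial (Fin m × Fin s) ℤ) : MvPolynomial (Fin m × Fin s) ℤ :=
  (MvPolynomial.aeval (fun v : Fin m × Fin s =>
      if v.1 = i then MvPolynomial.X v + MvPolynomial.C (h v.2) else MvPolynomial.X v)) G - G

/-- Iterated differencing along a list of (block index, shift) pairs. -/
noncomputable def iterDelta {s m : ℕ} :
    List (Fin m × (Fin s → ℤ)) → MvPolynomial (Fin m × Fin s) ℤ →
      MvPolynomial (Fin m × Fin s) ℤ
  | [], G => G
  | p :: L, G => deltaOp p.1 p.2 (iterDelta L G)

/-- The Gram determinant as a polynomial in `ms` variables. -/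
noncomputable def gramPoly (s m : ℕ) : MvPolynomial (Fin m × Fin s) ℤ :=
  Matrix.det (Matrix.of fun a b : Fin m =>
    ∑ n : Fin s, MvPolynomial.X (a, n) * MvPolynomial.X (b, n))

namespace IterDeltaAux

variable {s m : ℕ}

/-- The weight of an exponent vector in block `i`. -/
def wt (i : Fin m) (d : (Fin m × Fin s) →₀ ℕ) : ℕ := ∑ n : Fin s, d (i, n)

lemma wt_add (i : Fin m) (a b : (Fin m × Fin s) →₀ ℕ) : wt i (a + b) = wt i a + wt i b := by
  simp [wt, Finset.sum_add_distrib]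

lemma wt_single (i : Fin m) (v : Fin m × Fin s) (k : ℕ) :
    wt i (Finsupp.single v k) = if v.1 = i then k else 0 := by
  obtain ⟨a, b⟩ := v
  by_cases hai : a = i
  · subst hai
    simp [wt, Finsupp.single_apply, Prod.ext_iff, Finset.sum_ite_eq]
  · simp [wt, Finsupp.single_apply, Prod.ext_iff, hai]

lemma wt_eq_zero_iff {i : Fin m} {d : (Fin m × Fin s) →₀ ℕ} :
    wt i d = 0 ↔ ∀ n : Fin s, d (i, n) = 0 := by
  simp [wt, Finset.sum_eq_zero_iff]

/-- The degree of a polynomial in block `i`. -/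
noncomputable def bdeg (i : Fin m) (p : MvPolynomial (Fin m × Fin s) ℤ) : ℕ :=
  p.support.sup (wt i)

lemma bdeg_le {i : Fin m} {p : MvPolynomial (Fin m × Fin s) ℤ} {b : ℕ}
    (h : ∀ d ∈ p.support, wt i d ≤ b) : bdeg i p ≤ b :=
  Finset.sup_le h

lemma le_bdeg {i : Fin m} {p : MvPolynomial (Fin m × Fin s) ℤ} {d}
    (h : d ∈ p.support) : wt i d ≤ bdeg i p := Finset.le_sup h

lemma bdeg_zero (i : Fin m) : bdeg i (0 : MvPolynomial (Fin m × Fin s) ℤ) = 0 := by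
  simp [bdeg]

lemma bdeg_add_le (i : Fin m) (p q : MvPolynomial (Fin m × Fin s) ℤ) :
    bdeg i (p + q) ≤ max (bdeg i p) (bdeg i q) := by
  apply bdeg_le
  intro d hd
  rcases Finset.mem_union.1 (MvPolynomial.support_add hd) with h | h
  · exact le_max_of_le_left (le_bdeg h)
  · exact le_max_of_le_right (le_bdeg h)

lemma bdeg_neg (i : Fin m) (p : MvPolynomial (Fin m × Fin s) ℤ) :
    bdeg i (-p) = bdeg i p := by
  simp [bdeg, MvPolynomial.support_neg]

lemma bdeg_sub_le (i : Fin m) (p q : MvPolynomial (Fin m × Fin s) ℤ) :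
    bdeg i (p - q) ≤ max (bdeg i p) (bdeg i q) := by
  rw [sub_eq_add_neg]
  simpa [bdeg_neg] using bdeg_add_le i p (-q)

lemma bdeg_mul_le (i : Fin m) (p q : MvPolynomial (Fin m × Fin s) ℤ) :
    bdeg i (p * q) ≤ bdeg i p + bdeg i q := by
  apply bdeg_le
  intro d hd
  have := MvPolynomial.support_mul p q hd
  rcases Finset.mem_add.1 this with ⟨a, ha, b, hb, rfl⟩
  rw [wt_add]
  exact add_le_add (le_bdeg ha) (le_bdeg hb)

lemma bdeg_sum_le {α : Type*} (i : Fin m) (S : Finset α)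
    (f : α → MvPolynomial (Fin m × Fin s) ℤ) {b : ℕ}
    (h : ∀ t ∈ S, bdeg i (f t) ≤ b) : bdeg i (∑ t ∈ S, f t) ≤ b := by
  apply bdeg_le
  intro d hd
  have := MvPolynomial.support_sum hd
  rcases Finset.mem_biUnion.1 this with ⟨t, ht, hdt⟩
  exact le_trans (le_bdeg hdt) (h t ht)

lemma bdeg_monomial_le (i : Fin m) (d : (Fin m × Fin s) →₀ ℕ) (c : ℤ) :
    bdeg i (MvPolynomial.monomial d c) ≤ wt i d := by
  apply bdeg_le
  intro e he
  rw [MvPolynomial.support_monomial] at he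
  split at he
  · simp at he
  · simp only [Finset.mem_singleton] at he
    exact he ▸ le_rfl

lemma bdeg_C (i : Fin m) (c : ℤ) : bdeg i (MvPolynomial.C c : MvPolynomial (Fin m × Fin s) ℤ) = 0 := by
  have := bdeg_monomial_le (s := s) i 0 c
  simpa [wt, MvPolynomial.C_apply] using this

lemma bdeg_X_le (i : Fin m) (v : Fin m × Fin s) :
    bdeg i (MvPolynomial.X v : MvPolynomial (Fin m × Fin s) ℤ) ≤ if v.1 = i then 1 else 0 := by
  have := bdeg_monomial_le i (Finsupp.single v 1) 1
  rw [wt_single] at this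
  simpa [MvPolynomial.X] using this

lemma bdeg_pow_le (i : Fin m) (p : MvPolynomial (Fin m × Fin s) ℤ) (k : ℕ) :
    bdeg i (p ^ k) ≤ k * bdeg i p := by
  induction k with
  | zero => simpa using bdeg_C i 1
  | succ k ih =>
      rw [pow_succ]
      calc bdeg i (p ^ k * p) ≤ bdeg i (p ^ k) + bdeg i p := bdeg_mul_le _ _ _
      _ ≤ k * bdeg i p + bdeg i p := by omega
      _ = (k + 1) * bdeg i p := by ring

lemma bdeg_prod_le {α : Type*} (i : Fin m) (S : Finset α)
    (f : α → MvPolynomial (Fin m × Fin s) ℤ) (b : α → ℕ)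
    (h : ∀ t ∈ S, bdeg i (f t) ≤ b t) : bdeg i (∏ t ∈ S, f t) ≤ ∑ t ∈ S, b t := by
  classical
  induction S using Finset.induction with
  | empty => simpa using bdeg_C i 1
  | insert _ _ hnotmem ih =>
      rename_i a S'
      rw [Finset.prod_insert hnotmem, Finset.sum_insert hnotmem]
      calc bdeg i (f a * ∏ t ∈ S', f t) ≤ bdeg i (f a) + bdeg i (∏ t ∈ S', f t) :=
            bdeg_mul_le _ _ _
      _ ≤ b a + ∑ t ∈ S', b t := add_le_add (h a (Finset.mem_insert_self _ _))
            (ih fun t ht => h t (Finset.mem_insert_of_mem ht))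

lemma bdeg_natCast (i : Fin m) (n : ℕ) :
    bdeg i ((n : MvPolynomial (Fin m × Fin s) ℤ)) = 0 := by
  rw [← map_natCast (MvPolynomial.C : ℤ →+* MvPolynomial (Fin m × Fin s) ℤ) n]
  exact bdeg_C i n

lemma bdeg_intCast (i : Fin m) (z : ℤ) :
    bdeg i ((z : MvPolynomial (Fin m × Fin s) ℤ)) = 0 := by
  rw [← map_intCast (MvPolynomial.C : ℤ →+* MvPolynomial (Fin m × Fin s) ℤ) z]
  exact bdeg_C i z

/-- The substitution map underlying `deltaOp`. -/
noncomputable def subf (i : Fin m) (h : Fin s → ℤ) (v : Fin m × Fin s) :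
    MvPolynomial (Fin m × Fin s) ℤ :=
  if v.1 = i then MvPolynomial.X v + MvPolynomial.C (h v.2) else MvPolynomial.X v

lemma deltaOp_eq (i : Fin m) (h : Fin s → ℤ) (G : MvPolynomial (Fin m × Fin s) ℤ) :
    deltaOp i h G = MvPolynomial.aeval (subf i h) G - G := rfl

lemma bdeg_subf_le (i i' : Fin m) (h : Fin s → ℤ) (v : Fin m × Fin s) :
    bdeg i' (subf i h v) ≤ if v.1 = i' then 1 else 0 := by
  rw [subf]
  split
  · calc bdeg i' (MvPolynomial.X v + MvPolynomial.C (h v.2))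
        ≤ max (bdeg i' (MvPolynomial.X v)) (bdeg i' (MvPolynomial.C (h v.2))) :=
          bdeg_add_le _ _ _
    _ ≤ if v.1 = i' then 1 else 0 := by
        rw [bdeg_C]
        exact max_le (bdeg_X_le i' v) (by positivity)
  · exact bdeg_X_le i' v

lemma wt_eq_sum_support (i : Fin m) (d : (Fin m × Fin s) →₀ ℕ) :
    ∑ v ∈ d.support, d v * (if v.1 = i then 1 else 0) = wt i d := by
  classical
  rw [Finset.sum_subset (Finset.subset_univ d.support)
    (by intro v _ hv
        rw [Finsupp.notMem_support_iff.1 hv, zero_mul])]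
  rw [Fintype.sum_prod_type]
  rw [wt]
  rw [Finset.sum_comm]
  congr 1
  funext n
  rw [show (∑ a : Fin m, d (a, n) * (if (a, n).1 = i then 1 else 0)) =
      ∑ a : Fin m, (if a = i then d (a, n) else 0) from by
    apply Finset.sum_congr rfl; intro a _; split <;> simp_all]
  rw [Finset.sum_ite_eq' Finset.univ i fun a => d (a, n)]
  simp

lemma bdeg_aeval_monomial_le (i i' : Fin m) (h : Fin s → ℤ)
    (d : (Fin m × Fin s) →₀ ℕ) (c : ℤ) :
    bdeg i' (MvPolynomial.aeval (subf i h) (MvPolynomial.monomial d c)) ≤ wt i' d := by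
  rw [MvPolynomial.aeval_monomial]
  calc bdeg i' (algebraMap ℤ _ c * d.prod fun v k => subf i h v ^ k)
      ≤ bdeg i' (algebraMap ℤ _ c) + bdeg i' (d.prod fun v k => subf i h v ^ k) :=
        bdeg_mul_le _ _ _
  _ ≤ 0 + ∑ v ∈ d.support, d v * (if v.1 = i' then 1 else 0) := by
      apply add_le_add
      · exact le_of_eq (bdeg_C i' c)
      · rw [Finsupp.prod]
        apply bdeg_prod_le
        intro v _
        calc bdeg i' (subf i h v ^ d v) ≤ d v * bdeg i' (subf i h v) := bdeg_pow_le _ _ _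
        _ ≤ d v * (if v.1 = i' then 1 else 0) :=
            Nat.mul_le_mul_left _ (bdeg_subf_le i i' h v)
  _ = wt i' d := by rw [zero_add, wt_eq_sum_support]

/-- The substitution does not increase any block degree. -/
lemma bdeg_aeval_le (i i' : Fin m) (h : Fin s → ℤ) (p : MvPolynomial (Fin m × Fin s) ℤ) :
    bdeg i' (MvPolynomial.aeval (subf i h) p) ≤ bdeg i' p := by
  conv_lhs => rw [p.as_sum]
  rw [map_sum]
  apply bdeg_sum_le
  intro d hd
  exact le_trans (bdeg_aeval_monomial_le i i' h d _) (le_bdeg hd)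

lemma aeval_monomial_of_wt_zero (i : Fin m) (h : Fin s → ℤ)
    {d : (Fin m × Fin s) →₀ ℕ} (hd : wt i d = 0) (c : ℤ) :
    MvPolynomial.aeval (subf i h) (MvPolynomial.monomial d c) = MvPolynomial.monomial d c := by
  rw [MvPolynomial.aeval_monomial]
  have hsub : ∀ v ∈ d.support, subf i h v = MvPolynomial.X v := by
    intro v hv
    rw [subf, if_neg]
    intro hvi
    have : d (i, v.2) = 0 := wt_eq_zero_iff.1 hd v.2
    rw [← hvi] at this
    exact Finsupp.mem_support_iff.1 hv (by simpa using this)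
  rw [MvPolynomial.monomial_eq]
  congr 1
  rw [Finsupp.prod, Finsupp.prod]
  exact Finset.prod_congr rfl fun v hv => by rw [hsub v hv]

lemma bdeg_pow_sub_pow (i : Fin m) (v : Fin m × Fin s) (hv : v.1 = i) (c : ℤ) (k : ℕ) :
    bdeg i ((MvPolynomial.X v + MvPolynomial.C c) ^ k - MvPolynomial.X v ^ k) ≤ k - 1 := by
  have hexp : (MvPolynomial.X v + MvPolynomial.C c) ^ k - MvPolynomial.X v ^ k
      = ∑ jj ∈ Finset.range k, MvPolynomial.X v ^ jj * MvPolynomial.C c ^ (k - jj) *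
          (k.choose jj : MvPolynomial (Fin m × Fin s) ℤ) := by
    rw [add_pow, Finset.sum_range_succ]
    simp
  rw [hexp]
  apply bdeg_sum_le
  intro t ht
  have htk : t < k := Finset.mem_range.1 ht
  calc bdeg i (MvPolynomial.X v ^ t * MvPolynomial.C c ^ (k - t) *
        (k.choose t : MvPolynomial (Fin m × Fin s) ℤ))
      ≤ bdeg i (MvPolynomial.X v ^ t * MvPolynomial.C c ^ (k - t)) +
        bdeg i ((k.choose t : MvPolynomial (Fin m × Fin s) ℤ)) := bdeg_mul_le _ _ _
  _ ≤ (bdeg i (MvPolynomial.X v ^ t) + bdeg i (MvPolynomial.C c ^ (k - t))) + 0 := by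
      rw [bdeg_natCast]
      exact add_le_add (bdeg_mul_le _ _ _) le_rfl
  _ ≤ (t * 1 + (k - t) * 0) + 0 := by
      apply add_le_add _ le_rfl
      apply add_le_add
      · exact le_trans (bdeg_pow_le _ _ _) (Nat.mul_le_mul_left _ (by
          have := bdeg_X_le i v
          rw [if_pos hv] at this
          exact this))
      · exact le_trans (bdeg_pow_le _ _ _) (by rw [bdeg_C])
  _ ≤ k - 1 := by omega

/-- Key step: differencing a monomial drops the block degree. -/
lemma bdeg_delta_monomial (i : Fin m) (h : Fin s → ℤ) (d : (Fin m × Fin s) →₀ ℕ) (c : ℤ) :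
    bdeg i (MvPolynomial.aeval (subf i h) (MvPolynomial.monomial d c) -
      MvPolynomial.monomial d c) ≤ wt i d - 1 := by
  induction d using Finsupp.induction generalizing c with
  | zero => simp [bdeg_zero, MvPolynomial.aeval_monomial]
  | single_add v k d' hvd' hk ih =>
      have hmono : (MvPolynomial.monomial (Finsupp.single v k + d') c :
          MvPolynomial (Fin m × Fin s) ℤ)
          = MvPolynomial.X v ^ k * MvPolynomial.monomial d' c := by
        rw [MvPolynomial.X_pow_eq_monomial, MvPolynomial.monomial_mul, one_mul]
      set B : MvPolynomial (Fin m × Fin s) ℤ := MvPolynomial.monomial d' c with hB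
      set A : MvPolynomial (Fin m × Fin s) ℤ := MvPolynomial.aeval (subf i h) B with hA
      set a : MvPolynomial (Fin m × Fin s) ℤ := subf i h v ^ k with ha
      have hF : MvPolynomial.aeval (subf i h) (MvPolynomial.monomial (Finsupp.single v k + d') c)
          = a * A := by
        rw [hmono, map_mul, map_pow, MvPolynomial.aeval_X]
      have hsplit : MvPolynomial.aeval (subf i h)
            (MvPolynomial.monomial (Finsupp.single v k + d') c)
          - MvPolynomial.monomial (Finsupp.single v k + d') c
          = (a - MvPolynomial.X v ^ k) * A + MvPolynomial.X v ^ k * (A - B) := by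
        rw [hF, hmono]
        ring
      rw [hsplit, wt_add, wt_single]
      have hAle : bdeg i A ≤ wt i d' :=
        le_trans (bdeg_aeval_le i i h B) (bdeg_monomial_le i d' c)
      by_cases hvi : v.1 = i
      · rw [if_pos hvi]
        have h1 : bdeg i ((a - MvPolynomial.X v ^ k) * A) ≤ (k - 1) + wt i d' := by
          calc bdeg i ((a - MvPolynomial.X v ^ k) * A)
              ≤ bdeg i (a - MvPolynomial.X v ^ k) + bdeg i A := bdeg_mul_le _ _ _
          _ ≤ (k - 1) + wt i d' := by
              apply add_le_add _ hAle
              rw [ha, subf, if_pos hvi]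
              exact bdeg_pow_sub_pow i v hvi (h v.2) k
        by_cases hw : wt i d' = 0
        · have hAB : A = B := by rw [hA, hB, aeval_monomial_of_wt_zero i h hw]
          rw [hAB, sub_self, mul_zero, add_zero]
          calc bdeg i ((a - MvPolynomial.X v ^ k) * B) ≤ (k - 1) + wt i d' := by
                calc bdeg i ((a - MvPolynomial.X v ^ k) * B)
                    ≤ bdeg i (a - MvPolynomial.X v ^ k) + bdeg i B := bdeg_mul_le _ _ _
                _ ≤ (k - 1) + wt i d' := by
                    apply add_le_add _ (bdeg_monomial_le i d' c)
                    rw [ha, subf, if_pos hvi]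
                    exact bdeg_pow_sub_pow i v hvi (h v.2) k
          _ ≤ k + wt i d' - 1 := by omega
        · have h2 : bdeg i (MvPolynomial.X v ^ k * (A - B)) ≤ k + (wt i d' - 1) := by
            calc bdeg i (MvPolynomial.X v ^ k * (A - B))
                ≤ bdeg i (MvPolynomial.X v ^ k) + bdeg i (A - B) := bdeg_mul_le _ _ _
            _ ≤ k + (wt i d' - 1) := by
                apply add_le_add _ (ih c)
                calc bdeg i (MvPolynomial.X v ^ k) ≤ k * bdeg i (MvPolynomial.X v) :=
                      bdeg_pow_le _ _ _
                _ ≤ k * 1 := Nat.mul_le_mul_left _ (by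
                      have := bdeg_X_le i v; rw [if_pos hvi] at this; exact this)
                _ = k := by omega
          have hk1 : 1 ≤ k := Nat.one_le_iff_ne_zero.2 hk
          have hw1 : 1 ≤ wt i d' := Nat.one_le_iff_ne_zero.2 hw
          calc bdeg i ((a - MvPolynomial.X v ^ k) * A + MvPolynomial.X v ^ k * (A - B))
              ≤ max (bdeg i ((a - MvPolynomial.X v ^ k) * A))
                  (bdeg i (MvPolynomial.X v ^ k * (A - B))) := bdeg_add_le _ _ _
          _ ≤ k + wt i d' - 1 := by
              apply max_le <;> omega
      · rw [if_neg hvi, zero_add]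
        have haX : a = MvPolynomial.X v ^ k := by rw [ha, subf, if_neg hvi]
        rw [haX, sub_self, zero_mul, zero_add]
        calc bdeg i (MvPolynomial.X v ^ k * (A - B))
            ≤ bdeg i (MvPolynomial.X v ^ k) + bdeg i (A - B) := bdeg_mul_le _ _ _
        _ ≤ 0 + (wt i d' - 1) := by
            apply add_le_add _ (ih c)
            calc bdeg i (MvPolynomial.X v ^ k) ≤ k * bdeg i (MvPolynomial.X v) :=
                  bdeg_pow_le _ _ _
            _ ≤ k * 0 := Nat.mul_le_mul_left _ (by
                  have := bdeg_X_le i v; rw [if_neg hvi] at this; exact this)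
            _ = 0 := by omega
        _ = wt i d' - 1 := by omega

lemma bdeg_deltaOp_self (i : Fin m) (h : Fin s → ℤ) (G : MvPolynomial (Fin m × Fin s) ℤ) :
    bdeg i (deltaOp i h G) ≤ bdeg i G - 1 := by
  rw [deltaOp_eq]
  have hsplit : MvPolynomial.aeval (subf i h) G - G
      = ∑ d ∈ G.support, (MvPolynomial.aeval (subf i h) (MvPolynomial.monomial d (G.coeff d)) -
          MvPolynomial.monomial d (G.coeff d)) := by
    rw [Finset.sum_sub_distrib, ← map_sum, ← MvPolynomial.as_sum]
  rw [hsplit]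
  apply bdeg_sum_le
  intro d hd
  exact le_trans (bdeg_delta_monomial i h d _) (Nat.sub_le_sub_right (le_bdeg hd) 1)

lemma bdeg_deltaOp_le (i i' : Fin m) (h : Fin s → ℤ) (G : MvPolynomial (Fin m × Fin s) ℤ) :
    bdeg i' (deltaOp i h G) ≤ bdeg i' G := by
  rw [deltaOp_eq]
  exact le_trans (bdeg_sub_le _ _ _) (max_le (bdeg_aeval_le i i' h G) le_rfl)

lemma bdeg_iterDelta (i : Fin m) (L : List (Fin m × (Fin s → ℤ)))
    (G : MvPolynomial (Fin m × Fin s) ℤ) (b : ℕ) (hG : bdeg i G ≤ b) :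
    bdeg i (iterDelta L G) ≤ b - (L.map Prod.fst).count i := by
  induction L with
  | nil => simpa [iterDelta] using hG
  | cons p L ih =>
      rw [iterDelta]
      by_cases hp : p.1 = i
      · calc bdeg i (deltaOp p.1 p.2 (iterDelta L G))
            ≤ bdeg i (iterDelta L G) - 1 := by rw [hp]; exact bdeg_deltaOp_self i p.2 _
        _ ≤ (b - (L.map Prod.fst).count i) - 1 := Nat.sub_le_sub_right ih 1
        _ = b - ((p :: L).map Prod.fst).count i := by
            rw [List.map_cons, List.count_cons]
            simp [hp]
            omega
      · calc bdeg i (deltaOp p.1 p.2 (iterDelta L G))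
            ≤ bdeg i (iterDelta L G) := bdeg_deltaOp_le p.1 i p.2 _
        _ ≤ b - (L.map Prod.fst).count i := ih
        _ = b - ((p :: L).map Prod.fst).count i := by
            rw [List.map_cons, List.count_cons]
            simp [hp]

lemma bdeg_gram (i : Fin m) : bdeg i (gramPoly s m) ≤ 2 := by
  rw [gramPoly, Matrix.det_apply']
  apply bdeg_sum_le
  intro σ _
  calc bdeg i (((Equiv.Perm.sign σ : ℤ) : MvPolynomial (Fin m × Fin s) ℤ) *
        ∏ a : Fin m, Matrix.of (fun a b : Fin m =>
          ∑ n : Fin s, MvPolynomial.X (a, n) * MvPolynomial.X (b, n)) (σ a) a)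
      ≤ bdeg i (((Equiv.Perm.sign σ : ℤ) : MvPolynomial (Fin m × Fin s) ℤ)) +
        bdeg i (∏ a : Fin m, Matrix.of (fun a b : Fin m =>
          ∑ n : Fin s, MvPolynomial.X (a, n) * MvPolynomial.X (b, n)) (σ a) a) :=
        bdeg_mul_le _ _ _
  _ ≤ 0 + ∑ a : Fin m, ((if σ a = i then 1 else 0) + (if a = i then 1 else 0)) := by
      apply add_le_add (le_of_eq (bdeg_intCast i _))
      apply bdeg_prod_le
      intro a _
      rw [Matrix.of_apply]
      apply bdeg_sum_le
      intro n _
      calc bdeg i (MvPolynomial.X ((σ a, n) : Fin m × Fin s) * MvPolynomial.X (a, n))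
          ≤ bdeg i (MvPolynomial.X ((σ a, n) : Fin m × Fin s)) +
            bdeg i (MvPolynomial.X ((a, n) : Fin m × Fin s)) := bdeg_mul_le _ _ _
      _ ≤ (if σ a = i then 1 else 0) + (if a = i then 1 else 0) :=
          add_le_add (bdeg_X_le i _) (bdeg_X_le i _)
  _ = 2 := by
      rw [zero_add, Finset.sum_add_distrib]
      have h1 : (∑ a : Fin m, if σ a = i then (1:ℕ) else 0) = 1 := by
        rw [Equiv.sum_comp σ (fun b => if b = i then (1:ℕ) else 0)]
        rw [Finset.sum_ite_eq' Finset.univ i (fun _ => (1:ℕ))]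
        simp
      have h2 : (∑ a : Fin m, if a = i then (1:ℕ) else 0) = 1 := by
        rw [Finset.sum_ite_eq' Finset.univ i (fun _ => (1:ℕ))]
        simp
      omega

lemma count_ofFn {α : Type*} [DecidableEq α] :
    ∀ {n : ℕ} (f : Fin n → α) (a : α),
      (List.ofFn f).count a = ∑ k : Fin n, if f k = a then 1 else 0 := by
  intro n
  induction n with
  | zero => intro f a; simp
  | succ n ih =>
      intro f a
      rw [List.ofFn_succ, List.count_cons, ih, Fin.sum_univ_succ]
      by_cases hfa : f 0 = a
      · simp [hfa, add_comm]
      · simp [beq_iff_eq, hfa, Ne.symm hfa]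

end IterDeltaAux

open IterDeltaAux in
/-- If among the indices `j₁,…,j_{2m-1}` the index `j2m` occurs exactly once and every
other index occurs exactly twice, then the iterated difference
`Δ_{j₁,h₁} ⋯ Δ_{j_{2m-1},h_{2m-1}} D` involves only the variables of block `j2m`
and is an affine-linear polynomial (total degree at most 1) in them. -/
theorem iterDelta_gram_affine (s m : ℕ) (hm : 1 ≤ m)
    (j : Fin (2 * m - 1) → Fin m) (h : Fin (2 * m - 1) → Fin s → ℤ)
    (j2m : Fin m)
    (h1 : (Finset.univ.filter fun k => j k = j2m).card = 1)
    (h2 : ∀ i : Fin m, i ≠ j2m → (Finset.univ.filter fun k => j k = i).card = 2) :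
    (∀ v ∈ (iterDelta (List.ofFn fun k => (j k, h k)) (gramPoly s m)).vars, v.1 = j2m) ∧
    (iterDelta (List.ofFn fun k => (j k, h k)) (gramPoly s m)).totalDegree ≤ 1 := by
  classical
  set L : List (Fin m × (Fin s → ℤ)) := List.ofFn fun k => (j k, h k) with hL
  set P : MvPolynomial (Fin m × Fin s) ℤ := iterDelta L (gramPoly s m) with hP
  have hmap : L.map Prod.fst = List.ofFn j := by
    rw [hL, List.map_ofFn]
    rfl
  have hcount : ∀ i : Fin m, (L.map Prod.fst).count i
      = (Finset.univ.filter fun k => j k = i).card := by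
    intro i
    rw [hmap, count_ofFn j i, Finset.card_filter]
  have hb1 : bdeg j2m P ≤ 1 := by
    have := bdeg_iterDelta j2m L (gramPoly s m) 2 (bdeg_gram j2m)
    rw [hcount, h1, ← hP] at this
    exact this
  have hb0 : ∀ i : Fin m, i ≠ j2m → bdeg i P = 0 := by
    intro i hne
    have := bdeg_iterDelta i L (gramPoly s m) 2 (bdeg_gram i)
    rw [hcount, h2 i hne, ← hP] at this
    omega
  constructor
  · intro v hv
    rcases (MvPolynomial.mem_vars v).1 hv with ⟨d, hd, hvd⟩
    by_contra hne
    have hz : wt v.1 d = 0 := by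
      have := le_bdeg (i := v.1) hd
      rw [hb0 v.1 hne] at this
      omega
    have : d (v.1, v.2) = 0 := wt_eq_zero_iff.1 hz v.2
    exact Finsupp.mem_support_iff.1 hvd (by simpa using this)
  · rw [MvPolynomial.totalDegree]
    apply Finset.sup_le
    intro d hd
    have hsum : (d.sum fun _ e => e) = ∑ i : Fin m, wt i d := by
      rw [Finsupp.sum_fintype _ _ (fun _ => rfl), Fintype.sum_prod_type]
      rfl
    rw [hsum]
    rw [Finset.sum_eq_single j2m
      (fun i _ hne => by
        have := le_bdeg (i := i) hd
        rw [hb0 i hne] at this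
        omega)
      (fun habs => absurd (Finset.mem_univ _) habs)]
    exact le_trans (le_bdeg hd) hb1
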